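/- For all σ ≤ τ in the consecutive pattern poset, the Möbius function satisfies μ(σ,τ) ∈ {−1, 0, 1}. -/

import Mathlib

/-- Standardization of a list of distinct naturals: replace each entry by its rank
(the number of entries less than or equal to it). -/
def stdize (s : List ℕ) : List ℕ := s.map (fun x => (s.filter (· ≤ x)).length)

/-- All contiguous subwords (infixes) of a list. -/
def infixes (l : List ℕ) : List (List ℕ) := l.inits.flatMap List.tails

/-- `l` is a permutation of `{1,…,d}` where `d = l.length ≥ 1`; these are the
elements of the consecutive pattern poset. -/
def IsPermList (l : List ℕ) : Prop := l ≠ [] ∧ l.Perm (List.range' 1 l.length)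

/-- Consecutive pattern containment: `σ ≤ τ` iff `σ` is the standardization of
some contiguous subsequence of `τ`. -/
def PattLE (σ τ : List ℕ) : Prop := σ ∈ (infixes τ).map stdize

instance (σ τ : List ℕ) : Decidable (PattLE σ τ) :=
  inferInstanceAs (Decidable (σ ∈ (infixes τ).map stdize))

/-- A permutation is monotone if its letters strictly increase or strictly decrease. -/
def MonotoneList (l : List ℕ) : Prop := l.Chain' (· < ·) ∨ l.Chain' (· > ·)

/-- The interior `i(τ)`: standardization of `τ` with first and last letters removed. -/
def pattInterior (τ : List ℕ) : List ℕ := stdize τ.tail.dropLast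

/-- Length of the longest proper prefix of `τ` whose standardization is also the
standardization of a suffix of `τ`. -/
def extLen (τ : List ℕ) : ℕ :=
  Nat.findGreatest (fun k => stdize (τ.take k) = stdize (τ.drop (τ.length - k))) (τ.length - 1)

/-- The exterior `x(τ)`: the longest permutation that is both a proper prefix and a
suffix of `τ`. -/
def pattExterior (τ : List ℕ) : List ℕ := stdize (τ.take (extLen τ))

/-- The closed interval `[σ,τ]` in the consecutive pattern poset, as a `Finset`. -/
def pattInterval (σ τ : List ℕ) : Finset (List ℕ) :=
  ((infixes τ).map stdize).toFinset.filter (fun z => PattLE σ z)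

/-- The open interval `(σ,τ)` in the consecutive pattern poset, as a `Finset`. -/
def openPattInterval (σ τ : List ℕ) : Finset (List ℕ) :=
  ((infixes τ).map stdize).toFinset.filter (fun z => PattLE σ z ∧ z ≠ σ ∧ z ≠ τ)

/-- `τ` covers `σ` in the consecutive pattern poset: `σ < τ` and no element lies
strictly between them. -/
def CoveredBy (σ τ : List ℕ) : Prop :=
  PattLE σ τ ∧ σ ≠ τ ∧ ¬ ∃ ρ, IsPermList ρ ∧ PattLE σ ρ ∧ PattLE ρ τ ∧ ρ ≠ σ ∧ ρ ≠ τ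

/-- `c` is a maximal chain of the interval `[σ,τ]`: it starts at `τ`, ends at `σ`,
and each element covers the next. -/
def IsMaxChainPatt (σ τ : List ℕ) (c : List (List ℕ)) : Prop :=
  c.head? = some τ ∧ c.getLast? = some σ ∧ c.Chain' (fun a b => CoveredBy b a)

section Aux

open List

/-! ### Basic facts about `stdize` -/

/-- rank function -/
def rk (s : List ℕ) (x : ℕ) : ℕ := s.countP (· ≤ x)

lemma stdize_eq_map_rk (s : List ℕ) : stdize s = s.map (rk s) := by
  simp [stdize, rk, ← List.countP_eq_length_filter]

lemma length_stdize (s : List ℕ) : (stdize s).length = s.length := by simp [stdize]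

lemma stdize_nil : stdize [] = [] := rfl

lemma stdize_ne_nil {s : List ℕ} (h : s ≠ []) : stdize s ≠ [] := by
  simp [stdize_eq_map_rk, h]

lemma rk_mono (s : List ℕ) {x y : ℕ} (h : x ≤ y) : rk s x ≤ rk s y :=
  List.countP_mono_left (fun z _ hz => by
    simp only [decide_eq_true_eq] at hz ⊢; omega)

lemma rk_lt_rk {s : List ℕ} {x y : ℕ} (hx : x ∈ s) (hyx : y < x) : rk s y < rk s x := by
  induction s with
  | nil => cases hx
  | cons a t ih =>
    unfold rk at *
    rw [List.countP_cons, List.countP_cons]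
    rcases List.mem_cons.mp hx with rfl | hx'
    · have h1 : t.countP (· ≤ y) ≤ t.countP (· ≤ x) := rk_mono t (le_of_lt hyx)
      have h2 : (decide (x ≤ y)) = false := by simp; omega
      have h3 : (decide (x ≤ x)) = true := by simp
      rw [h2, h3]
      simp; omega
    · have h1 := ih hx'
      have h2 : (if (decide (a ≤ y)) = true then 1 else 0) ≤
          (if (decide (a ≤ x)) = true then 1 else 0) := by
        split_ifs with p q <;> simp_all <;> omega
      omega

lemma rk_le_iff {s : List ℕ} {x y : ℕ} (hx : x ∈ s) (hy : y ∈ s) :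
    rk s y ≤ rk s x ↔ y ≤ x := by
  constructor
  · intro h
    by_contra hc
    exact absurd h (not_le.mpr (rk_lt_rk hy (by omega)))
  · exact fun h => rk_mono s h

lemma stdize_map_eq (g : ℕ → ℕ) (s : List ℕ)
    (h : ∀ x ∈ s, ∀ y ∈ s, y ≤ x ↔ g y ≤ g x) :
    stdize (s.map g) = stdize s := by
  rw [stdize_eq_map_rk, stdize_eq_map_rk, List.map_map]
  apply List.map_congr_left
  intro x hx
  show rk (s.map g) (g x) = rk s x
  unfold rk
  rw [List.countP_map]
  apply List.countP_congr
  intro y hy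
  simp only [Function.comp, decide_eq_true_eq]
  exact (h x hx y hy).symm

lemma stdize_map_rk_sublist (s u : List ℕ) (hu : u.Sublist s) :
    stdize (u.map (rk s)) = stdize u :=
  stdize_map_eq _ _ (fun x hx y hy => (rk_le_iff (hu.subset hx) (hu.subset hy)).symm)

/-! ### infixes and PattLE -/

lemma mem_infixes {w l : List ℕ} : w ∈ infixes l ↔ w <:+: l := by
  simp only [infixes, List.mem_flatMap, List.mem_inits, List.mem_tails]
  constructor
  · rintro ⟨t, ht, hw⟩
    obtain ⟨a, rfl⟩ := hw
    obtain ⟨b, rfl⟩ := ht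
    exact ⟨a, b, by simp⟩
  · rintro ⟨a, b, rfl⟩
    exact ⟨a ++ w, ⟨b, by simp⟩, ⟨a, rfl⟩⟩

lemma pattLE_iff {z t : List ℕ} : PattLE z t ↔ ∃ w, w <:+: t ∧ stdize w = z := by
  simp only [PattLE, List.mem_map]
  constructor
  · rintro ⟨w, hw, rfl⟩; exact ⟨w, mem_infixes.mp hw, rfl⟩
  · rintro ⟨w, hw, rfl⟩; exact ⟨w, mem_infixes.mpr hw, rfl⟩

lemma infix_of_map {g : ℕ → ℕ} {w t : List ℕ} (h : w <:+: t.map g) :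
    ∃ u, u <:+: t ∧ w = u.map g := by
  obtain ⟨a, b, hab⟩ := h
  rw [List.append_assoc] at hab
  obtain ⟨t₁, t₂, rfl, _h1, h2⟩ := List.map_eq_append_iff.mp hab.symm
  obtain ⟨t₃, t₄, rfl, h3, _h4⟩ := List.map_eq_append_iff.mp h2
  exact ⟨t₃, ⟨t₁, t₄, by simp⟩, h3.symm⟩

lemma pattLE_stdize_right {z : List ℕ} (t : List ℕ) : PattLE z (stdize t) ↔ PattLE z t := by
  rw [pattLE_iff, pattLE_iff]
  constructor
  · rintro ⟨w, hw, rfl⟩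
    rw [stdize_eq_map_rk] at hw
    obtain ⟨u, hu, rfl⟩ := infix_of_map hw
    exact ⟨u, hu, (stdize_map_rk_sublist _ _ hu.sublist).symm⟩
  · rintro ⟨w, hw, rfl⟩
    refine ⟨w.map (rk t), ?_, stdize_map_rk_sublist _ _ hw.sublist⟩
    rw [stdize_eq_map_rk]
    exact hw.map _

lemma pattLE_of_infix {w t : List ℕ} (h : w <:+: t) : PattLE (stdize w) t :=
  pattLE_iff.mpr ⟨w, h, rfl⟩

lemma pattLE_infix_mono {u v : List ℕ} (h : u <:+: v) {z : List ℕ} (hz : PattLE z u) :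
    PattLE z v := by
  obtain ⟨w, hw, rfl⟩ := pattLE_iff.mp hz
  exact pattLE_of_infix (hw.trans h)

lemma pattLE_trans {a b c : List ℕ} (hab : PattLE a b) (hbc : PattLE b c) : PattLE a c := by
  obtain ⟨u, hu, rfl⟩ := pattLE_iff.mp hbc
  exact pattLE_infix_mono hu ((pattLE_stdize_right u).mp hab)

lemma pattLE_length {a b : List ℕ} (h : PattLE a b) : a.length ≤ b.length := by
  obtain ⟨w, hw, rfl⟩ := pattLE_iff.mp h
  rw [length_stdize]
  exact hw.length_le

/-! ### perm lists -/

lemma isPermList_nodup {l : List ℕ} (h : IsPermList l) : l.Nodup :=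
  h.2.nodup_iff.mpr (List.nodup_range' _ (by simp))

lemma countP_range' (n x : ℕ) (h1 : 1 ≤ x) (h2 : x ≤ n) :
    (List.range' 1 n).countP (· ≤ x) = x := by
  have hsplit : List.range' 1 x ++ List.range' (1 + x) (n - x) = List.range' 1 n := by
    have := List.range'_append (s := 1) (m := x) (n := n - x) (step := 1)
    simp only [one_mul] at this
    rw [show x + (n - x) = n by omega] at this
    exact this
  rw [← hsplit, List.countP_append]
  have e1 : (List.range' 1 x).countP (· ≤ x) = x := by
    rw [List.countP_eq_length.mpr, List.length_range']
    intro a ha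
    have := List.mem_range'_1.mp ha
    simp only [decide_eq_true_eq]; omega
  have e2 : (List.range' (1 + x) (n - x)).countP (· ≤ x) = 0 := by
    rw [List.countP_eq_zero]
    intro a ha
    have := List.mem_range'_1.mp ha
    simp only [decide_eq_true_eq]; omega
  omega

lemma stdize_of_perm {l : List ℕ} (h : IsPermList l) : stdize l = l := by
  conv_rhs => rw [← List.map_id l]
  rw [stdize_eq_map_rk]
  apply List.map_congr_left
  intro x hx
  have hmem : x ∈ List.range' 1 l.length := h.2.subset hx
  have hb := List.mem_range'_1.mp hmem
  show rk l x = x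
  unfold rk
  rw [h.2.countP_eq]
  exact countP_range' _ _ hb.1 (by omega)

lemma pattLE_refl {l : List ℕ} (h : IsPermList l) : PattLE l l := by
  conv_lhs => rw [← stdize_of_perm h]
  exact pattLE_of_infix (List.infix_refl l)

lemma stdize_isPermList {w : List ℕ} (hne : w ≠ []) (hnd : w.Nodup) :
    IsPermList (stdize w) := by
  constructor
  · exact stdize_ne_nil hne
  · rw [length_stdize]
    have hsub : stdize w ⊆ List.range' 1 w.length := by
      intro x hx
      rw [stdize_eq_map_rk] at hx
      obtain ⟨y, hy, rfl⟩ := List.mem_map.mp hx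
      apply List.mem_range'_1.mpr
      constructor
      · show 1 ≤ rk w y
        have : 0 < w.countP (· ≤ y) :=
          List.countP_pos_iff.mpr ⟨y, hy, by simp⟩
        unfold rk; omega
      · have : rk w y ≤ w.length := List.countP_le_length
        omega
    have hnd2 : (stdize w).Nodup := by
      rw [stdize_eq_map_rk]
      refine List.Nodup.map_on ?_ hnd
      intro x hx y hy hxy
      by_contra hne'
      rcases Nat.lt_or_ge x y with h | h
      · exact absurd hxy (Nat.ne_of_lt (rk_lt_rk hy h))
      · have hlt : y < x := by omega
        exact absurd hxy (Ne.symm (Nat.ne_of_lt (rk_lt_rk hx hlt)))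
    refine (hnd2.subperm hsub).perm_of_length_le ?_
    rw [List.length_range', length_stdize]

lemma stdize_isPermList_of_sublist {τ w : List ℕ} (hτ : IsPermList τ) (hsub : w.Sublist τ)
    (hne : w ≠ []) : IsPermList (stdize w) :=
  stdize_isPermList hne (hsub.nodup (isPermList_nodup hτ))

lemma pattLE_eq_of_length {a b : List ℕ} (h : PattLE a b) (hb : IsPermList b)
    (hl : b.length ≤ a.length) : a = b := by
  obtain ⟨w, hw, rfl⟩ := pattLE_iff.mp h
  rw [length_stdize] at hl
  have : w = b := hw.sublist.eq_of_length (le_antisymm hw.length_le hl)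
  subst this
  exact stdize_of_perm hb

lemma pattLE_isPermList {σ z t : List ℕ} (hσ : IsPermList σ) (ht : IsPermList t)
    (h1 : PattLE z t) (h2 : PattLE σ z) : IsPermList z := by
  obtain ⟨w, hw, rfl⟩ := pattLE_iff.mp h1
  refine stdize_isPermList_of_sublist ht hw.sublist ?_
  rintro rfl
  have hlen := pattLE_length h2
  have : σ.length ≤ 0 := by simpa [length_stdize] using hlen
  exact hσ.1 (List.length_eq_zero_iff.mp (by omega))

/-! ### intervals -/

lemma mem_pattInterval {σ t z : List ℕ} :
    z ∈ pattInterval σ t ↔ PattLE z t ∧ PattLE σ z := by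
  unfold pattInterval
  rw [Finset.mem_filter, List.mem_toFinset]
  exact Iff.rfl

lemma interval_empty {σ t : List ℕ} (h : ¬ PattLE σ t) : pattInterval σ t = ∅ := by
  ext z
  simp only [mem_pattInterval, Finset.notMem_empty, iff_false, not_and]
  intro h1 h2
  exact h (pattLE_trans h2 h1)

lemma interval_point {σ : List ℕ} (hσ : IsPermList σ) : pattInterval σ σ = {σ} := by
  ext z
  simp only [mem_pattInterval, Finset.mem_singleton]
  constructor
  · rintro ⟨h1, h2⟩
    exact pattLE_eq_of_length h1 hσ (pattLE_length h2)
  · rintro rfl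
    exact ⟨pattLE_refl hσ, pattLE_refl hσ⟩

/-! ### list surgery lemmas -/

lemma tail_dropLast' (l : List ℕ) : l.dropLast.tail = l.tail.dropLast := by
  rw [← List.drop_one, ← List.drop_one, List.dropLast_eq_take, List.dropLast_eq_take,
    List.drop_take, List.length_drop]

lemma dropLast_drop' (i : ℕ) (l : List ℕ) : (l.drop i).dropLast = l.dropLast.drop i := by
  rw [List.dropLast_eq_take, List.dropLast_eq_take, List.drop_take, List.length_drop,
    show l.length - i - 1 = l.length - 1 - i by omega]

lemma tail_take' (e : ℕ) (l : List ℕ) : (l.take e).tail = l.tail.take (e - 1) := by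
  rw [← List.drop_one, ← List.drop_one, List.drop_take]

lemma infix_proper_split {w t : List ℕ} (h : w <:+: t) (hne : w ≠ t) :
    w <:+: t.dropLast ∨ w <:+: t.tail := by
  obtain ⟨a, b, rfl⟩ := h
  rcases eq_or_ne b [] with rfl | hb
  · rcases eq_or_ne a [] with rfl | ha
    · simp at hne
    · right
      rw [List.append_nil, List.tail_append_of_ne_nil ha]
      exact ⟨a.tail, [], by simp⟩
  · left
    rw [List.dropLast_append_of_ne_nil hb]
    exact ⟨a, b.dropLast, rfl⟩

lemma dropLast_infix (l : List ℕ) : l.dropLast <:+: l := by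
  rw [List.dropLast_eq_take]
  exact (List.take_prefix _ l).isInfix

lemma tail_infix (l : List ℕ) : l.tail <:+: l := by
  rw [← List.drop_one]
  exact (List.drop_suffix 1 l).isInfix

lemma stdize_dropLast_congr {u v : List ℕ} (h : stdize u = stdize v) :
    stdize u.dropLast = stdize v.dropLast := by
  have key : ∀ w : List ℕ, stdize (stdize w).dropLast = stdize w.dropLast := by
    intro w
    rw [stdize_eq_map_rk w, ← List.map_dropLast]
    exact stdize_map_rk_sublist _ _ (List.dropLast_sublist w)
  rw [← key u, ← key v, h]

/-! ### extLen facts -/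

lemma extLen_spec (τ : List ℕ) :
    stdize (τ.take (extLen τ)) = stdize (τ.drop (τ.length - extLen τ)) := by
  have h0 : stdize (τ.take 0) = stdize (τ.drop (τ.length - 0)) := by
    rw [List.take_zero, Nat.sub_zero, List.drop_length]
  unfold extLen
  exact Nat.findGreatest_spec
    (P := fun k => stdize (τ.take k) = stdize (τ.drop (τ.length - k))) (Nat.zero_le _) h0

lemma extLen_le (τ : List ℕ) : extLen τ ≤ τ.length - 1 := Nat.findGreatest_le _

/-! ### the three interval decompositions -/

lemma interval_erase (σ τ : List ℕ) (hτ : IsPermList τ) :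
    (pattInterval σ τ).erase τ
      = pattInterval σ (stdize τ.dropLast) ∪ pattInterval σ (stdize τ.tail) := by
  ext z
  simp only [Finset.mem_erase, Finset.mem_union, mem_pattInterval, pattLE_stdize_right]
  constructor
  · rintro ⟨hne, hzt, hσz⟩
    obtain ⟨w, hw, rfl⟩ := pattLE_iff.mp hzt
    have hwne : w ≠ τ := by
      rintro rfl
      exact hne (stdize_of_perm hτ)
    rcases infix_proper_split hw hwne with h | h
    · exact Or.inl ⟨pattLE_iff.mpr ⟨w, h, rfl⟩, hσz⟩
    · exact Or.inr ⟨pattLE_iff.mpr ⟨w, h, rfl⟩, hσz⟩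
  · have hτne : τ ≠ [] := hτ.1
    have hlen : 0 < τ.length := List.length_pos_iff.mpr hτne
    rintro (⟨hz, hσz⟩ | ⟨hz, hσz⟩)
    · refine ⟨?_, pattLE_infix_mono (dropLast_infix τ) hz, hσz⟩
      intro hzτ
      have hL := pattLE_length hz
      rw [List.length_dropLast, hzτ] at hL
      omega
    · refine ⟨?_, pattLE_infix_mono (tail_infix τ) hz, hσz⟩
      intro hzτ
      have hL := pattLE_length hz
      rw [List.length_tail, hzτ] at hL
      omega

lemma interval_inter_AB (σ τ : List ℕ) (hσ : IsPermList σ) (hτ : IsPermList τ) :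
    pattInterval σ (stdize τ.dropLast) ∩ pattInterval σ (stdize τ.tail)
      = pattInterval σ (pattInterior τ) ∪ pattInterval σ (pattExterior τ) := by
  have hσpos : 0 < σ.length := List.length_pos_iff.mpr hσ.1
  have hτpos : 0 < τ.length := List.length_pos_iff.mpr hτ.1
  ext z
  simp only [Finset.mem_inter, Finset.mem_union, mem_pattInterval, pattInterior, pattExterior,
    pattLE_stdize_right]
  constructor
  · rintro ⟨⟨hzA, hσz⟩, hzB, -⟩
    have hzpos : 0 < z.length := lt_of_lt_of_le hσpos (pattLE_length hσz)
    obtain ⟨w, hw, rfl⟩ := pattLE_iff.mp hzA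
    obtain ⟨a, b, hab⟩ := hw
    rcases eq_or_ne a [] with rfl | ha
    · -- w is a prefix of dropLast τ
      obtain ⟨w', hw', hsw'⟩ := pattLE_iff.mp hzB
      obtain ⟨a', b', hab'⟩ := hw'
      rcases eq_or_ne b' [] with rfl | hb'
      · -- w' is a suffix of tail τ  : border case
        right
        have hwpre : w <+: τ := by
          refine List.IsPrefix.trans ⟨b, by simpa using hab⟩ ?_
          rw [List.dropLast_eq_take]; exact List.take_prefix _ _
        have hwsuf : w' <:+ τ := by
          refine List.IsSuffix.trans ⟨a', by simpa using hab'⟩ ?_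
          rw [← List.drop_one]; exact List.drop_suffix _ _
        have hwtake : w = τ.take w.length := List.prefix_iff_eq_take.mp hwpre
        have hwdrop : w' = τ.drop (τ.length - w'.length) := List.suffix_iff_eq_drop.mp hwsuf
        have hlw : w.length = w'.length := by
          have e1 : (stdize w).length = w.length := length_stdize w
          have e2 : (stdize w').length = w'.length := length_stdize w'
          rw [hsw'] at e2
          omega
        have hwlen : w.length ≤ τ.length - 1 := by
          have := hab ▸ (List.length_dropLast (xs := τ))
          have h2 : w.length ≤ τ.dropLast.length := by
            rw [← hab]; simp
          rw [List.length_dropLast] at h2; exact h2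
        have hP : stdize (τ.take w.length) = stdize (τ.drop (τ.length - w.length)) := by
          rw [← hwtake, hlw, ← hwdrop]
          exact hsw'.symm
        have hke : w.length ≤ extLen τ := Nat.le_findGreatest hwlen hP
        refine ⟨?_, hσz⟩
        have hwX : w = (τ.take (extLen τ)).take w.length := by
          rw [List.take_take, inf_eq_left.mpr hke]
          exact hwtake
        have hinf : w <:+: τ.take (extLen τ) := by
          rw [hwX]
          exact ((List.take_prefix _ _).isInfix : (τ.take (extLen τ)).take w.length <:+: τ.take (extLen τ))
        exact pattLE_of_infix hinf
      · -- w' avoids the last letter: infix of interior word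
        left
        refine ⟨?_, hσz⟩
        have hinf : w' <:+: τ.tail.dropLast := by
          have : a' ++ w' ++ b'.dropLast = (τ.tail).dropLast := by
            rw [← hab', List.append_assoc, List.dropLast_append_of_ne_nil hb',
              ← List.append_assoc]
          exact ⟨a', b'.dropLast, this⟩
        rw [← hsw']
        exact pattLE_of_infix hinf
    · -- w avoids the first letter: infix of interior word
      left
      refine ⟨?_, hσz⟩
      have hinf : w <:+: τ.tail.dropLast := by
        rw [← tail_dropLast']
        refine ⟨a.tail, b, ?_⟩
        rw [← hab, List.append_assoc, List.append_assoc, List.tail_append_of_ne_nil ha]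
      exact pattLE_of_infix hinf
  · rintro (⟨hzM, hσz⟩ | ⟨hzX, hσz⟩)
    · constructor
      · refine ⟨pattLE_infix_mono ?_ hzM, hσz⟩
        rw [← tail_dropLast']
        exact tail_infix _
      · refine ⟨pattLE_infix_mono ?_ hzM, hσz⟩
        exact dropLast_infix _
    · -- X part
      have hzpos : 0 < z.length := lt_of_lt_of_le hσpos (pattLE_length hσz)
      have hepos : 0 < extLen τ := by
        by_contra h
        have h0 : extLen τ = 0 := by omega
        have hL := pattLE_length hzX
        rw [h0, List.take_zero] at hL
        simp only [List.length_nil, Nat.le_zero] at hL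
        omega
      have hele : extLen τ ≤ τ.length - 1 := extLen_le τ
      constructor
      · refine ⟨pattLE_infix_mono ?_ hzX, hσz⟩
        have : τ.take (extLen τ) <+: τ.dropLast := by
          rw [List.dropLast_eq_take, List.prefix_iff_eq_take, List.take_take,
            List.length_take]
          congr 1
          omega
        exact this.isInfix
      · refine ⟨?_, hσz⟩
        have hzX' : PattLE z (τ.drop (τ.length - extLen τ)) := by
          rw [← pattLE_stdize_right, ← extLen_spec, pattLE_stdize_right]
          exact hzX
        refine pattLE_infix_mono ?_ hzX'
        have : τ.drop (τ.length - extLen τ) = τ.tail.drop (τ.length - extLen τ - 1) := by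
          rw [← List.drop_one, List.drop_drop]
          congr 1
          omega
        rw [this]
        exact (List.drop_suffix _ _).isInfix

end Aux

section Aux2

lemma interval_inter_MX_of_le (σ : List ℕ) {τ : List ℕ}
    (h : PattLE (pattExterior τ) (pattInterior τ)) :
    pattInterval σ (pattInterior τ) ∩ pattInterval σ (pattExterior τ)
      = pattInterval σ (pattExterior τ) := by
  ext z
  simp only [Finset.mem_inter, mem_pattInterval]
  constructor
  · rintro ⟨-, hx⟩; exact hx
  · rintro ⟨hzX, hσz⟩
    exact ⟨⟨pattLE_trans hzX h, hσz⟩, hzX, hσz⟩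

lemma interval_inter_MX_of_not_le {σ τ : List ℕ} (hσ : IsPermList σ) (hτ : IsPermList τ)
    (hσX : PattLE σ (pattExterior τ))
    (h : ¬ PattLE (pattExterior τ) (pattInterior τ)) :
    pattInterval σ (pattInterior τ) ∩ pattInterval σ (pattExterior τ)
      = (pattInterval σ (pattExterior τ)).erase (pattExterior τ) := by
  have hσpos : 0 < σ.length := List.length_pos_iff.mpr hσ.1
  have hXpos : 0 < (pattExterior τ).length :=
    lt_of_lt_of_le hσpos (pattLE_length hσX)
  have hepos : 0 < extLen τ := by
    by_contra h0
    have : extLen τ = 0 := by omega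
    unfold pattExterior at hXpos
    rw [this, List.take_zero, stdize_nil] at hXpos
    simp at hXpos
  have hele : extLen τ ≤ τ.length - 1 := extLen_le τ
  have hτpos : 0 < τ.length := by
    have := List.length_pos_iff.mpr hτ.1; omega
  ext z
  simp only [Finset.mem_inter, Finset.mem_erase, mem_pattInterval]
  constructor
  · rintro ⟨⟨hzM, hσz⟩, hzX, -⟩
    refine ⟨?_, hzX, hσz⟩
    rintro rfl
    exact h hzM
  · rintro ⟨hne, hzX, hσz⟩
    refine ⟨⟨?_, hσz⟩, hzX, hσz⟩
    -- z ≤ X, z ≠ X  ⇒  z ≤ M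
    unfold pattExterior at hzX hne
    rw [pattLE_stdize_right] at hzX
    obtain ⟨w, hw, rfl⟩ := pattLE_iff.mp hzX
    have hwne : w ≠ τ.take (extLen τ) := by
      rintro rfl; exact hne rfl
    unfold pattInterior
    rw [pattLE_stdize_right]
    rcases infix_proper_split hw hwne with hcase | hcase
    · -- w inside dropLast of the prefix copy of X; use the suffix copy instead
      have h1 : PattLE (stdize w) (stdize (τ.take (extLen τ)).dropLast) :=
        (pattLE_stdize_right _).mpr (pattLE_of_infix hcase)
      have h2 : stdize (τ.take (extLen τ)).dropLast
          = stdize (τ.drop (τ.length - extLen τ)).dropLast :=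
        stdize_dropLast_congr (extLen_spec τ)
      rw [h2, pattLE_stdize_right] at h1
      refine pattLE_infix_mono ?_ h1
      rw [dropLast_drop', ← tail_dropLast']
      have : τ.dropLast.drop (τ.length - extLen τ)
          = (τ.dropLast.tail).drop (τ.length - extLen τ - 1) := by
        rw [← List.drop_one, List.drop_drop]
        congr 1
        omega
      rw [this]
      exact (List.drop_suffix _ _).isInfix
    · -- w inside tail of the prefix copy of X
      refine pattLE_infix_mono ?_ (pattLE_of_infix hcase)
      rw [tail_take']
      have : τ.tail.take (extLen τ - 1) = (τ.tail.dropLast).take (extLen τ - 1) := by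
        rw [List.dropLast_eq_take, List.take_take, List.length_tail,
          inf_eq_left.mpr (by omega)]
      rw [this]
      exact (List.take_prefix _ _).isInfix

lemma sum_interval_eval (μ : List ℕ → List ℕ → ℤ)
    (hμ : ∀ σ τ : List ℕ, IsPermList σ → IsPermList τ → PattLE σ τ →
      ∑ z ∈ pattInterval σ τ, μ σ z = if σ = τ then 1 else 0)
    {σ : List ℕ} (hσ : IsPermList σ) {w τ : List ℕ} (hτ : IsPermList τ) (hsub : w.Sublist τ) :
    ∑ z ∈ pattInterval σ (stdize w), μ σ z
      = if PattLE σ (stdize w) then (if σ = stdize w then 1 else 0) else 0 := by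
  by_cases h : PattLE σ (stdize w)
  · rw [if_pos h]
    have hw : w ≠ [] := by
      rintro rfl
      have hlen := pattLE_length h
      have : σ.length ≤ 0 := by simpa [length_stdize] using hlen
      exact hσ.1 (List.length_eq_zero_iff.mp (by omega))
    exact hμ σ _ hσ (stdize_isPermList_of_sublist hτ hsub hw) h
  · rw [if_neg h, interval_empty h, Finset.sum_empty]

lemma mu_self (μ : List ℕ → List ℕ → ℤ)
    (hμ : ∀ σ τ : List ℕ, IsPermList σ → IsPermList τ → PattLE σ τ →
      ∑ z ∈ pattInterval σ τ, μ σ z = if σ = τ then 1 else 0)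
    {σ : List ℕ} (hσ : IsPermList σ) : μ σ σ = 1 := by
  have h := hμ σ σ hσ hσ (pattLE_refl hσ)
  rw [interval_point hσ, if_pos rfl, Finset.sum_singleton] at h
  exact h

lemma mu_rank1 (μ : List ℕ → List ℕ → ℤ)
    (hμ : ∀ σ τ : List ℕ, IsPermList σ → IsPermList τ → PattLE σ τ →
      ∑ z ∈ pattInterval σ τ, μ σ z = if σ = τ then 1 else 0)
    {σ t : List ℕ} (hσ : IsPermList σ) (ht : IsPermList t) (hle : PattLE σ t)
    (hlen : t.length = σ.length + 1) : μ σ t = -1 := by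
  have hne : σ ≠ t := by
    intro h; rw [h] at hlen; omega
  have hpair : pattInterval σ t = {σ, t} := by
    ext z
    simp only [mem_pattInterval, Finset.mem_insert, Finset.mem_singleton]
    constructor
    · rintro ⟨hzt, hσz⟩
      have hzperm : IsPermList z := pattLE_isPermList hσ ht hzt hσz
      have l1 := pattLE_length hzt
      have l2 := pattLE_length hσz
      rcases Nat.lt_or_ge z.length t.length with h | h
      · left
        exact (pattLE_eq_of_length hσz hzperm (by omega)).symm
      · right
        exact pattLE_eq_of_length hzt ht h
    · rintro (rfl | rfl)
      · exact ⟨hle, pattLE_refl hσ⟩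
      · exact ⟨pattLE_refl ht, hle⟩
  have h := hμ σ t hσ ht hle
  rw [hpair, Finset.sum_pair hne, if_neg hne, mu_self μ hμ hσ] at h
  linarith

end Aux2


/-- The Möbius function of the consecutive pattern poset only takes the values
−1, 0, 1.  Here `μ` is any function satisfying the defining recursion of the
Möbius function of this (locally finite) poset. -/
theorem mobius_consecutive_pattern_poset_values
    (μ : List ℕ → List ℕ → ℤ)
    (hμ : ∀ σ τ : List ℕ, IsPermList σ → IsPermList τ → PattLE σ τ →
      ∑ z ∈ pattInterval σ τ, μ σ z = if σ = τ then 1 else 0) :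
    ∀ σ τ : List ℕ, IsPermList σ → IsPermList τ → PattLE σ τ →
      μ σ τ = -1 ∨ μ σ τ = 0 ∨ μ σ τ = 1 := by
  intro σ τ hσ hτ hστ
  have main : ∀ n (τ : List ℕ), τ.length = n → IsPermList τ → PattLE σ τ →
      (μ σ τ = -1 ∨ μ σ τ = 0 ∨ μ σ τ = 1) := by
    intro n
    induction n using Nat.strong_induction_on with
    | _ n IH =>
      intro τ hn hτ hστ
      subst hn
      by_cases heq : σ = τ
      · subst heq
        right; right; exact mu_self μ hμ hσ
      have hσpos : 0 < σ.length := List.length_pos_iff.mpr hσ.1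
      have hlt : σ.length < τ.length := by
        rcases Nat.lt_or_ge σ.length τ.length with h | h
        · exact h
        · exact absurd (pattLE_eq_of_length hστ hτ h) heq
      by_cases hrk1 : τ.length = σ.length + 1
      · left; exact mu_rank1 μ hμ hσ hτ hστ hrk1
      have hgap : σ.length + 1 < τ.length := by omega
      have hτpos : 0 < τ.length := by omega
      have hAlen : (stdize τ.dropLast).length = τ.length - 1 := by
        rw [length_stdize, List.length_dropLast]
      have hBlen : (stdize τ.tail).length = τ.length - 1 := by
        rw [length_stdize, List.length_tail]
      have hsum0 : ∑ z ∈ pattInterval σ τ, μ σ z = 0 := by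
        rw [hμ σ τ hσ hτ hστ, if_neg heq]
      have hτmem : τ ∈ pattInterval σ τ := mem_pattInterval.mpr ⟨pattLE_refl hτ, hστ⟩
      have h1 : ∑ z ∈ (pattInterval σ τ).erase τ, μ σ z + μ σ τ = 0 := by
        rw [Finset.sum_erase_add _ _ hτmem]; exact hsum0
      rw [interval_erase σ τ hτ] at h1
      have hSA : ∑ z ∈ pattInterval σ (stdize τ.dropLast), μ σ z = 0 := by
        rw [sum_interval_eval μ hμ hσ hτ (List.dropLast_sublist τ)]
        split_ifs with p q
        · exfalso
          have := congrArg List.length q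
          rw [hAlen] at this
          omega
        · rfl
        · rfl
      have hSB : ∑ z ∈ pattInterval σ (stdize τ.tail), μ σ z = 0 := by
        rw [sum_interval_eval μ hμ hσ hτ (List.tail_sublist τ)]
        split_ifs with p q
        · exfalso
          have := congrArg List.length q
          rw [hBlen] at this
          omega
        · rfl
        · rfl
      have h2 := Finset.sum_union_inter (s₁ := pattInterval σ (stdize τ.dropLast))
        (s₂ := pattInterval σ (stdize τ.tail)) (f := μ σ)
      rw [hSA, hSB] at h2
      have h3 : ∑ z ∈ pattInterval σ (stdize τ.dropLast) ∩ pattInterval σ (stdize τ.tail),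
          μ σ z = μ σ τ := by linarith
      rw [interval_inter_AB σ τ hσ hτ] at h3
      have h4 := Finset.sum_union_inter (s₁ := pattInterval σ (pattInterior τ))
        (s₂ := pattInterval σ (pattExterior τ)) (f := μ σ)
      rw [h3] at h4
      have hMw : pattInterior τ = stdize (τ.tail.dropLast) := rfl
      have hXw : pattExterior τ = stdize (τ.take (extLen τ)) := rfl
      have hMsub : (τ.tail.dropLast).Sublist τ :=
        (List.dropLast_sublist _).trans (List.tail_sublist τ)
      have hXsub : (τ.take (extLen τ)).Sublist τ := List.take_sublist _ _
      have hSM : ∑ z ∈ pattInterval σ (pattInterior τ), μ σ z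
          = if PattLE σ (pattInterior τ) then (if σ = pattInterior τ then 1 else 0) else 0 := by
        rw [hMw]
        exact sum_interval_eval μ hμ hσ hτ hMsub
      by_cases hσX : PattLE σ (pattExterior τ)
      · have hXpos : 0 < (pattExterior τ).length := lt_of_lt_of_le hσpos (pattLE_length hσX)
        have hXperm : IsPermList (pattExterior τ) := by
          have hne : τ.take (extLen τ) ≠ [] := by
            intro h
            rw [hXw, h] at hXpos
            simp [stdize_nil] at hXpos
          rw [hXw]
          exact stdize_isPermList_of_sublist hτ hXsub hne
        have hXle : (pattExterior τ).length ≤ τ.length - 1 := by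
          rw [hXw, length_stdize, List.length_take]
          have := extLen_le τ
          omega
        by_cases hXM : PattLE (pattExterior τ) (pattInterior τ)
        · rw [interval_inter_MX_of_le σ hXM] at h4
          have h5 : μ σ τ = ∑ z ∈ pattInterval σ (pattInterior τ), μ σ z := by linarith
          rw [hSM] at h5
          split_ifs at h5
          · right; right; exact h5
          · right; left; exact h5
          · right; left; exact h5
        · rw [interval_inter_MX_of_not_le hσ hτ hσX hXM] at h4
          have hXmem : pattExterior τ ∈ pattInterval σ (pattExterior τ) :=
            mem_pattInterval.mpr ⟨pattLE_refl hXperm, hσX⟩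
          have h5 := Finset.sum_erase_add (pattInterval σ (pattExterior τ)) (μ σ) hXmem
          have h6 : μ σ τ = (∑ z ∈ pattInterval σ (pattInterior τ), μ σ z)
              + μ σ (pattExterior τ) := by linarith
          by_cases hσeqX : σ = pattExterior τ
          · rw [← hσeqX, mu_self μ hμ hσ, hSM] at h6
            have hnM : ¬ PattLE σ (pattInterior τ) := by
              rw [hσeqX]; exact hXM
            rw [if_neg hnM] at h6
            right; right; linarith
          · have hXlen : (pattExterior τ).length < τ.length := by omega
            have hσXlt : σ.length < (pattExterior τ).length := by
              rcases Nat.lt_or_ge σ.length (pattExterior τ).length with h | h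
              · exact h
              · exact absurd (pattLE_eq_of_length hσX hXperm h) hσeqX
            have hMlen : (pattInterior τ).length = τ.length - 2 := by
              rw [hMw, length_stdize, List.length_dropLast, List.length_tail]
              omega
            by_cases hσM : σ = pattInterior τ
            · have hσMle : PattLE σ (pattInterior τ) := by
                rw [← hσM]; exact pattLE_refl hσ
              rw [hSM, if_pos hσMle, if_pos hσM] at h6
              have hσMlen : σ.length = τ.length - 2 := by
                rw [hσM, hMlen]
              have hXr1 : (pattExterior τ).length = σ.length + 1 := by omega
              rw [mu_rank1 μ hμ hσ hXperm hσX hXr1] at h6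
              right; left; linarith
            · rw [hSM] at h6
              have hite : (if PattLE σ (pattInterior τ) then
                  (if σ = pattInterior τ then (1:ℤ) else 0) else 0) = 0 := by
                by_cases p : PattLE σ (pattInterior τ)
                · rw [if_pos p, if_neg hσM]
                · rw [if_neg p]
              rw [hite] at h6
              have hIH := IH (pattExterior τ).length hXlen (pattExterior τ) rfl hXperm hσX
              rcases hIH with h | h | h
              · left; rw [h] at h6; linarith
              · right; left; rw [h] at h6; linarith
              · right; right; rw [h] at h6; linarith
      · have hIX : pattInterval σ (pattExterior τ) = ∅ := interval_empty hσX
        rw [hIX] at h4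
        simp only [Finset.inter_empty, Finset.sum_empty, add_zero] at h4
        rw [hSM] at h4
        split_ifs at h4
        · right; right; linarith
        · right; left; linarith
        · right; left; linarith
  exact main τ.length τ rfl hτ hστ
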